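/- Let d = 2, let G = (V,E) be a strongly connected directed graph on vertices {1,…,n}, and let A = [a_ij] be a strictly diagonally dominant weight matrix for G. Suppose x = (x_1,…,x_n) is a fixed point of the consensus map f_A such that ⟨x_i, x_j⟩ > 0 for all i, j with a_ij > 0. Then every complex eigenvalue of the projected Jacobian J(x) has modulus at most 1, and 1 is an eigenvalue of J(x); in particular x is not an unstable fixed point. -/

import Mathlib

open scoped BigOperators InnerProductSpace

noncomputable section

/-- The conical combination `Σ_j a_ij x_j`. -/
def consSum {n d : ℕ} (A : Matrix (Fin n) (Fin n) ℝ)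
    (x : Fin n → EuclideanSpace ℝ (Fin d)) (i : Fin n) : EuclideanSpace ℝ (Fin d) :=
  ∑ j, A i j • x j

/-- The consensus map `f_A`: projection of the conical combination onto the unit sphere. -/
def consMap {n d : ℕ} (A : Matrix (Fin n) (Fin n) ℝ)
    (x : Fin n → EuclideanSpace ℝ (Fin d)) (i : Fin n) : EuclideanSpace ℝ (Fin d) :=
  ‖consSum A x i‖⁻¹ • consSum A x i

/-- The block-diagonal projection matrix `P_x` with diagonal blocks `I_d − x_i x_iᵀ`. -/
def projBlock {n d : ℕ} (x : Fin n → EuclideanSpace ℝ (Fin d)) :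
    Matrix (Fin n × Fin d) (Fin n × Fin d) ℝ :=
  Matrix.of fun p q =>
    if p.1 = q.1 then (if p.2 = q.2 then (1 : ℝ) else 0) - x p.1 p.2 * x p.1 q.2 else 0

/-- The diagonal normalization matrix `D(AX)`, with `i`-th entry `‖Σ_j a_ij x_j‖⁻¹`. -/
def Dmat {n d : ℕ} (A : Matrix (Fin n) (Fin n) ℝ)
    (x : Fin n → EuclideanSpace ℝ (Fin d)) : Matrix (Fin n) (Fin n) ℝ :=
  Matrix.diagonal fun i => ‖consSum A x i‖⁻¹

/-- The projected Jacobian `J(x) = P_{f(x)} (D(AX)A ⊗ I_d) P_x`. -/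
def Jmat {n d : ℕ} (A : Matrix (Fin n) (Fin n) ℝ)
    (x : Fin n → EuclideanSpace ℝ (Fin d)) :
    Matrix (Fin n × Fin d) (Fin n × Fin d) ℝ :=
  projBlock (consMap A x) *
    Matrix.kroneckerMap (· * ·) (Dmat A x * A) (1 : Matrix (Fin d) (Fin d) ℝ) *
    projBlock x

/-- for `d = 2`, a strongly connected directed graph and a strictly
diagonally dominant weight matrix, any fixed point `x` with `⟨x_i, x_j⟩ > 0` whenever
`a_ij > 0` has a projected Jacobian all of whose complex eigenvalues have modulus at
most `1`, with `1` an eigenvalue; in particular `x` is not unstable. -/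
theorem stmt_16 (n : ℕ) (hn : 1 ≤ n)
    (E : Fin n → Fin n → Prop)
    (hconn : ∀ i j, Relation.ReflTransGen E i j)
    (A : Matrix (Fin n) (Fin n) ℝ)
    (hApos : ∀ i j, 0 ≤ A i j)
    (hAE : ∀ i j, i ≠ j → (0 < A i j ↔ E i j))
    (hdd : ∀ i, ∑ j ∈ Finset.univ.erase i, A i j < A i i)
    (x : Fin n → EuclideanSpace ℝ (Fin 2)) (hx : ∀ i, ‖x i‖ = 1)
    (hfix : ∀ i, consMap A x i = x i)
    (hinner : ∀ i j, 0 < A i j → 0 < ⟪x i, x j⟫_ℝ) :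
    (∀ (μ : ℂ) (v : Fin n × Fin 2 → ℂ), v ≠ 0 →
        ((Jmat A x).map Complex.ofReal).mulVec v = μ • v → ‖μ‖ ≤ 1) ∧
    ∃ v : Fin n × Fin 2 → ℂ, v ≠ 0 ∧
        ((Jmat A x).map Complex.ofReal).mulVec v = v := by
  -- squared norm components
  have hxsq : ∀ i, x i 0 * x i 0 + x i 1 * x i 1 = 1 := by
    intro i
    have h1 : ⟪x i, x i⟫_ℝ = 1 := by rw [real_inner_self_eq_norm_mul_norm, hx]; ring
    simpa only [PiLp.inner_apply, RCLike.inner_apply, conj_trivial, Fin.sum_univ_two] using h1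
  have hcinner : ∀ i j, ⟪x i, x j⟫_ℝ = x i 0 * x j 0 + x i 1 * x j 1 := by
    intro i j; simp [PiLp.inner_apply, RCLike.inner_apply, Fin.sum_univ_two]; ring
  -- positivity of norms
  have hrpos : ∀ i, 0 < ‖consSum A x i‖ := by
    intro i
    have hlb : ∀ j, -(A i j) ≤ A i j * ⟪x i, x j⟫_ℝ := by
      intro j
      have h1 : |⟪x i, x j⟫_ℝ| ≤ 1 := by
        have h := abs_real_inner_le_norm (x i) (x j)
        rwa [hx, hx, one_mul] at h
      nlinarith [hApos i j, (abs_le.mp h1).1, (abs_le.mp h1).2]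
    have hs : ⟪x i, consSum A x i⟫_ℝ = ∑ j, A i j * ⟪x i, x j⟫_ℝ := by
      simp only [consSum, inner_sum, real_inner_smul_right]
    have hpos : 0 < ⟪x i, consSum A x i⟫_ℝ := by
      rw [hs, ← Finset.add_sum_erase _ _ (Finset.mem_univ i)]
      have h2 : A i i * ⟪x i, x i⟫_ℝ = A i i := by
        rw [real_inner_self_eq_norm_mul_norm, hx]; ring
      have h3 : ∑ j ∈ Finset.univ.erase i, -(A i j)
          ≤ ∑ j ∈ Finset.univ.erase i, A i j * ⟪x i, x j⟫_ℝ :=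
        Finset.sum_le_sum fun j _ => hlb j
      rw [Finset.sum_neg_distrib] at h3
      have := hdd i
      linarith
    have h4 := real_inner_le_norm (x i) (consSum A x i)
    rw [hx, one_mul] at h4
    linarith
  -- fixed point equation
  have hsum : ∀ i, consSum A x i = ‖consSum A x i‖ • x i := by
    intro i
    have h := hfix i
    unfold consMap at h
    have h2 := congrArg (fun z => ‖consSum A x i‖ • z) h
    simpa [smul_smul, mul_inv_cancel₀ (ne_of_gt (hrpos i))] using h2
  have hxs : ∀ i, ⟪x i, consSum A x i⟫_ℝ = ‖consSum A x i‖ := by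
    intro i
    conv_lhs => rw [hsum i]
    rw [real_inner_smul_right, real_inner_self_eq_norm_mul_norm, hx]; ring
  -- perpendicular vectors
  set y : Fin n → Fin 2 → ℝ := fun i => ![-(x i 1), x i 0] with hy
  have hyy : ∀ i j, (∑ e, y i e * y j e) = ⟪x i, x j⟫_ℝ := by
    intro i j
    rw [hcinner, Fin.sum_univ_two]
    simp [hy]
    ring
  have hysq : ∀ i, (∑ e, y i e * y i e) = 1 := by
    intro i
    rw [hyy i i, hcinner]
    exact hxsq i
  have hP : ∀ (i k : Fin n) (a c : Fin 2),
      projBlock x (i, a) (k, c) = if i = k then y i a * y i c else 0 := by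
    intro i k a c
    by_cases h : i = k
    · subst h
      simp only [projBlock, Matrix.of_apply, if_pos rfl]
      fin_cases a <;> fin_cases c <;> simp [hy] <;> nlinarith [hxsq i]
    · simp [projBlock, h]
  set M : Matrix (Fin n) (Fin n) ℝ :=
      fun i j => ‖consSum A x i‖⁻¹ * (A i j * ⟪x i, x j⟫_ℝ) with hM
  have hMnn : ∀ i j, 0 ≤ M i j := by
    intro i j
    rcases eq_or_lt_of_le (hApos i j) with h | h
    · simp [hM, ← h]
    · have := hinner i j h
      have := hrpos i
      positivity
  have hMrow : ∀ i, ∑ j, M i j = 1 := by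
    intro i
    have : ∑ j, M i j = ‖consSum A x i‖⁻¹ * ∑ j, A i j * ⟪x i, x j⟫_ℝ := by
      rw [Finset.mul_sum]
    rw [this]
    have hs : ⟪x i, consSum A x i⟫_ℝ = ∑ j, A i j * ⟪x i, x j⟫_ℝ := by
      simp only [consSum, inner_sum, real_inner_smul_right]
    rw [← hs, hxs i, inv_mul_cancel₀ (ne_of_gt (hrpos i))]
  have hJ : ∀ i a j b, Jmat A x (i, a) (j, b) = y i a * M i j * y j b := by
    intro i a j b
    have hxc : consMap A x = x := funext hfix
    have hK : ∀ (k l : Fin n) (c e : Fin 2),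
        Matrix.kroneckerMap (· * ·) (Dmat A x * A) (1 : Matrix (Fin 2) (Fin 2) ℝ) (k, c) (l, e)
          = (‖consSum A x k‖⁻¹ * A k l) * (if c = e then 1 else 0) := by
      intro k l c e
      simp [Matrix.kroneckerMap_apply, Dmat, Matrix.diagonal_mul, Matrix.one_apply]
    have hPK : ∀ (i : Fin n) (a : Fin 2) (l : Fin n) (e : Fin 2),
        (projBlock x * Matrix.kroneckerMap (· * ·) (Dmat A x * A)
          (1 : Matrix (Fin 2) (Fin 2) ℝ)) (i, a) (l, e)
          = y i a * y i e * (‖consSum A x i‖⁻¹ * A i l) := by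
      intro i a l e
      rw [Matrix.mul_apply, Fintype.sum_prod_type]
      simp [hP, hK, ite_mul, zero_mul, mul_ite, mul_zero, mul_one,
        Finset.sum_ite_irrel, Finset.sum_const_zero,
        Finset.sum_ite_eq, Finset.sum_ite_eq', Finset.mem_univ]
      fin_cases e <;>
        simp [Dmat, Matrix.diagonal_mul, Matrix.one_apply]
    rw [Jmat, hxc, Matrix.mul_apply, Fintype.sum_prod_type]
    simp only [hPK, hP, mul_ite, mul_zero, Finset.sum_ite_irrel, Finset.sum_const_zero,
      Finset.sum_ite_eq', Finset.mem_univ, if_true]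
    have hterm : ∀ e, y i a * y i e * (‖consSum A x i‖⁻¹ * A i j) * (y j e * y j b)
        = (y i e * y j e) * (y i a * (‖consSum A x i‖⁻¹ * A i j) * y j b) := fun e => by ring
    rw [Finset.sum_congr rfl fun e _ => hterm e, ← Finset.sum_mul, hyy, hM]
    ring
  -- generic mulVec formula
  have hmul : ∀ (v : Fin n × Fin 2 → ℂ) (i : Fin n) (a : Fin 2),
      ((Jmat A x).map Complex.ofReal).mulVec v (i, a)
        = (y i a : ℂ) * ∑ j, (M i j : ℂ) * ∑ b, (y j b : ℂ) * v (j, b) := by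
    intro v i a
    simp only [Matrix.mulVec, dotProduct, Matrix.map_apply, Fintype.sum_prod_type, hJ]
    rw [Finset.mul_sum]
    refine Finset.sum_congr rfl fun j _ => ?_
    rw [Finset.mul_sum, Finset.mul_sum]
    refine Finset.sum_congr rfl fun b _ => ?_
    push_cast
    ring
  -- the all-ones tangent eigenvector
  have i0 : Fin n := ⟨0, hn⟩
  have hynz : ∃ a, y i0 a ≠ 0 := by
    by_contra h
    push_neg at h
    have := hysq i0
    rw [Fin.sum_univ_two, h 0, h 1] at this
    norm_num at this
  constructor
  · rintro μ v hv hev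
    set w : Fin n → ℂ := fun j => ∑ b, (y j b : ℂ) * v (j, b) with hw
    have heig : ∀ i a, (y i a : ℂ) * (∑ j, (M i j : ℂ) * w j) = μ * v (i, a) := by
      intro i a
      rw [← hmul v i a, hev]
      simp
    have hwe : ∀ i, (∑ j, (M i j : ℂ) * w j) = μ * w i := by
      intro i
      have h1 : ∑ a, (y i a : ℂ) * ((y i a : ℂ) * ∑ j, (M i j : ℂ) * w j)
          = ∑ a, (y i a : ℂ) * (μ * v (i, a)) :=
        Finset.sum_congr rfl fun a _ => by rw [heig i a]
      have hys : (∑ a, (y i a : ℂ) * (y i a : ℂ)) = 1 := by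
        have h2 := hysq i
        have : ((∑ a, y i a * y i a : ℝ) : ℂ) = ((1 : ℝ) : ℂ) := by rw [h2]
        push_cast at this
        simpa using this
      calc (∑ j, (M i j : ℂ) * w j)
          = (∑ a, (y i a : ℂ) * (y i a : ℂ)) * ∑ j, (M i j : ℂ) * w j := by rw [hys, one_mul]
        _ = ∑ a, (y i a : ℂ) * ((y i a : ℂ) * ∑ j, (M i j : ℂ) * w j) := by
            rw [Finset.sum_mul]; exact Finset.sum_congr rfl fun a _ => by ring
        _ = ∑ a, (y i a : ℂ) * (μ * v (i, a)) := h1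
        _ = μ * w i := by
            rw [hw, Finset.mul_sum]; exact Finset.sum_congr rfl fun a _ => by ring
    by_cases hwz : ∀ i, w i = 0
    · obtain ⟨⟨i, a⟩, hp⟩ : ∃ p, v p ≠ 0 := by
        by_contra h
        push_neg at h
        exact hv (funext h)
      have h0 : μ * v (i, a) = 0 := by
        rw [← heig i a]
        simp [hwz]
      rcases mul_eq_zero.mp h0 with h | h
      · simp [h]
      · exact absurd h hp
    · push_neg at hwz
      obtain ⟨i₁, hi₁⟩ := hwz
      obtain ⟨i, -, hi⟩ := Finset.exists_max_image Finset.univ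
        (fun j => ‖w j‖) ⟨i₁, Finset.mem_univ i₁⟩
      have hwipos : 0 < ‖w i‖ :=
        lt_of_lt_of_le (norm_pos_iff.mpr hi₁) (hi i₁ (Finset.mem_univ i₁))
      have key : ‖μ‖ * ‖w i‖ ≤ 1 * ‖w i‖ := by
        rw [one_mul, ← norm_mul, ← hwe i]
        calc ‖∑ j, (M i j : ℂ) * w j‖
            ≤ ∑ j, ‖(M i j : ℂ) * w j‖ :=
              norm_sum_le _ _
          _ = ∑ j, M i j * ‖w j‖ := by
              refine Finset.sum_congr rfl fun j _ => ?_
              rw [norm_mul, Complex.norm_real, Real.norm_of_nonneg (hMnn i j)]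
          _ ≤ ∑ j, M i j * ‖w i‖ :=
              Finset.sum_le_sum fun j _ =>
                mul_le_mul_of_nonneg_left (hi j (Finset.mem_univ j)) (hMnn i j)
          _ = ‖w i‖ := by rw [← Finset.sum_mul, hMrow i, one_mul]
      exact le_of_mul_le_mul_right key hwipos
  · refine ⟨fun p => (y p.1 p.2 : ℂ), ?_, ?_⟩
    · intro h
      obtain ⟨a, ha⟩ := hynz
      have := congrFun h (i0, a)
      simp only [Pi.zero_apply, Complex.ofReal_eq_zero] at this
      exact ha this
    · funext p
      obtain ⟨i, a⟩ := p
      rw [hmul]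
      have hws : ∀ j, (∑ b, (y j b : ℂ) * ((y j b : ℂ))) = 1 := by
        intro j
        have h2 := hysq j
        have : ((∑ b, y j b * y j b : ℝ) : ℂ) = ((1 : ℝ) : ℂ) := by rw [h2]
        push_cast at this
        simpa using this
      have hMs : (∑ j, (M i j : ℂ)) = 1 := by
        have : ((∑ j, M i j : ℝ) : ℂ) = ((1 : ℝ) : ℂ) := by rw [hMrow i]
        push_cast at this
        simpa using this
      calc (y i a : ℂ) * ∑ j, (M i j : ℂ) * ∑ b, (y j b : ℂ) * (y j b : ℂ)
          = (y i a : ℂ) * ∑ j, (M i j : ℂ) := by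
            congr 1
            exact Finset.sum_congr rfl fun j _ => by rw [hws j, mul_one]
        _ = (y i a : ℂ) := by rw [hMs, mul_one]

end
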